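/- arXiv:1207.2671 — 6 statements merged into one kernel-verified Lean document; each statement's English description precedes it below -/
import Mathlib

section
/- For positive integers r and squarefree D, the number of pairs of coprime positive integers (p,q) with q² − p² = r²D is at most 2^(ω(rD)−1), where ω(n) denotes the number of distinct prime divisors of n. -/
private def mm (ℓ : ℕ) : ℕ := if ℓ = 2 then 4 else ℓ

private lemma valdet {N x y : ℕ} (hN : N ≠ 0) (hxy : x * y = N)
    (hg : Nat.gcd x y ∣ 2) (hpar : x % 2 = y % 2) {p : ℕ} (hpN : p ∈ N.primeFactors) :
    x.factorization p = if p = 2 then (if 4 ∣ x then N.factorization 2 - 1 else 1)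
      else (if p ∣ x then N.factorization p else 0) := by
  have hx0 : x ≠ 0 := fun h => hN (by simp [← hxy, h])
  have hy0 : y ≠ 0 := fun h => hN (by simp [← hxy, h])
  have hprime : p.Prime := Nat.prime_of_mem_primeFactors hpN
  have hdvdN : p ∣ N := Nat.dvd_of_mem_primeFactors hpN
  have hsum : x.factorization p + y.factorization p = N.factorization p := by
    rw [← hxy, Nat.factorization_mul hx0 hy0]; simp
  by_cases h2 : p = 2
  · subst h2
    have hx2 : 2 ∣ x := by
      rcases (Nat.Prime.dvd_mul Nat.prime_two).mp (hxy ▸ hdvdN) with h | h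
      · exact h
      · omega
    have hy2 : 2 ∣ y := by omega
    have hvx1 : 1 ≤ x.factorization 2 := by
      rw [← Nat.Prime.pow_dvd_iff_le_factorization Nat.prime_two hx0]
      simpa using hx2
    have hvy1 : 1 ≤ y.factorization 2 := by
      rw [← Nat.Prime.pow_dvd_iff_le_factorization Nat.prime_two hy0]
      simpa using hy2
    have hnotboth : ¬(4 ∣ x ∧ 4 ∣ y) := by
      rintro ⟨ha, hb⟩
      have : (4:ℕ) ∣ 2 := dvd_trans (Nat.dvd_gcd ha hb) hg
      omega
    by_cases h4 : 4 ∣ x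
    · have hvx2 : 2 ≤ x.factorization 2 := by
        rw [← Nat.Prime.pow_dvd_iff_le_factorization Nat.prime_two hx0,
          show (2:ℕ)^2 = 4 from rfl]
        exact h4
      have hvy2 : ¬ 2 ≤ y.factorization 2 := by
        rw [← Nat.Prime.pow_dvd_iff_le_factorization Nat.prime_two hy0,
          show (2:ℕ)^2 = 4 from rfl]
        exact fun h => hnotboth ⟨h4, h⟩
      rw [if_pos (rfl : (2:ℕ) = 2), if_pos h4]
      omega
    · have hvx2 : ¬ 2 ≤ x.factorization 2 := by
        rw [← Nat.Prime.pow_dvd_iff_le_factorization Nat.prime_two hx0,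
          show (2:ℕ)^2 = 4 from rfl]
        exact h4
      rw [if_pos (rfl : (2:ℕ) = 2), if_neg h4]
      omega
  · have hnotboth : ¬(p ∣ x ∧ p ∣ y) := by
      rintro ⟨ha, hb⟩
      exact h2 ((Nat.prime_dvd_prime_iff_eq hprime Nat.prime_two).mp
        (dvd_trans (Nat.dvd_gcd ha hb) hg))
    by_cases hdx : p ∣ x
    · have hy : y.factorization p = 0 :=
        Nat.factorization_eq_zero_of_not_dvd (fun h => hnotboth ⟨hdx, h⟩)
      simp only [if_neg h2, if_pos hdx]
      omega
    · simp only [if_neg h2, if_neg hdx]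
      exact Nat.factorization_eq_zero_of_not_dvd hdx

private lemma det {N x y x' y' : ℕ} (hN : N ≠ 0) (hxy : x * y = N) (hxy' : x' * y' = N)
    (hg : Nat.gcd x y ∣ 2) (hg' : Nat.gcd x' y' ∣ 2)
    (hpar : x % 2 = y % 2) (hpar' : x' % 2 = y' % 2)
    (hc : ∀ ℓ ∈ N.primeFactors, (mm ℓ ∣ x ↔ mm ℓ ∣ x')) : x = x' := by
  have hx0 : x ≠ 0 := fun h => hN (by simp [← hxy, h])
  have hx'0 : x' ≠ 0 := fun h => hN (by simp [← hxy', h])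
  refine Nat.eq_of_factorization_eq hx0 hx'0 fun p => ?_
  by_cases hpN : p ∈ N.primeFactors
  · rw [valdet hN hxy hg hpar hpN, valdet hN hxy' hg' hpar' hpN]
    have h := hc p hpN
    by_cases h2 : p = 2
    · subst h2
      rw [show mm 2 = 4 from rfl] at h
      rw [if_pos (rfl : (2:ℕ) = 2), if_pos (rfl : (2:ℕ) = 2)]
      by_cases h4 : 4 ∣ x
      · rw [if_pos h4, if_pos (h.mp h4)]
      · rw [if_neg h4, if_neg (fun hh => h4 (h.mpr hh))]
    · simp only [mm, if_neg h2] at h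
      simp only [if_neg h2]
      by_cases hdx : p ∣ x
      · rw [if_pos hdx, if_pos (h.mp hdx)]
      · rw [if_neg hdx, if_neg (fun hh => hdx (h.mpr hh))]
  · by_cases hpp : p.Prime
    · have hnd : ¬ p ∣ N := fun h => hpN (Nat.mem_primeFactors.mpr ⟨hpp, h, hN⟩)
      rw [Nat.factorization_eq_zero_of_not_dvd
          (fun h => hnd (h.trans ⟨y, hxy.symm⟩)),
        Nat.factorization_eq_zero_of_not_dvd
          (fun h => hnd (h.trans ⟨y', hxy'.symm⟩))]
    · rw [Nat.factorization_eq_zero_of_not_prime _ hpp,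
        Nat.factorization_eq_zero_of_not_prime _ hpp]

private lemma filter_eq_iff {P : Finset ℕ} {c c' : ℕ → Prop} [DecidablePred c]
    [DecidablePred c'] (h : P.filter c = P.filter c') : ∀ ℓ ∈ P, (c ℓ ↔ c' ℓ) := by
  intro ℓ hℓ
  constructor <;> intro hc
  · have : ℓ ∈ P.filter c' := h ▸ Finset.mem_filter.mpr ⟨hℓ, hc⟩
    exact (Finset.mem_filter.mp this).2
  · have : ℓ ∈ P.filter c := h.symm ▸ Finset.mem_filter.mpr ⟨hℓ, hc⟩
    exact (Finset.mem_filter.mp this).2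

theorem stmt_5 (D r : ℕ) (hD : 0 < D) (hr : 0 < r) (hsf : Squarefree D) :
    Set.ncard {pq : ℕ × ℕ | 0 < pq.1 ∧ 0 < pq.2 ∧ Nat.gcd pq.1 pq.2 = 1 ∧
        pq.2 ^ 2 = pq.1 ^ 2 + r ^ 2 * D}
      ≤ 2 ^ ((r * D).primeFactors.card - 1) := by
  set S : Set (ℕ × ℕ) := {pq : ℕ × ℕ | 0 < pq.1 ∧ 0 < pq.2 ∧ Nat.gcd pq.1 pq.2 = 1 ∧
        pq.2 ^ 2 = pq.1 ^ 2 + r ^ 2 * D} with hSdef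
  rcases S.eq_empty_or_nonempty with hE | hNE
  · simp [hE]
  · have hN0 : r ^ 2 * D ≠ 0 := by positivity
    -- key facts for any solution
    have key : ∀ pq ∈ S, pq.1 < pq.2 ∧ (pq.2 + pq.1) * (pq.2 - pq.1) = r ^ 2 * D ∧
        Nat.gcd (pq.2 + pq.1) (pq.2 - pq.1) ∣ 2 ∧
        (pq.2 + pq.1) % 2 = (pq.2 - pq.1) % 2 := by
      rintro ⟨p, q⟩ ⟨hp, hq, hg, heq⟩
      dsimp only at hp hq hg heq ⊢
      have h1 : 0 < r ^ 2 * D := by positivity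
      have hlt : p < q := by
        by_contra h
        push_neg at h
        have := Nat.pow_le_pow_left h 2
        omega
      refine ⟨hlt, ?_, ?_, by omega⟩
      · have h2 : q ^ 2 - p ^ 2 = (q + p) * (q - p) := Nat.sq_sub_sq q p
        have h3 : q ^ 2 - p ^ 2 = r ^ 2 * D := by omega
        omega
      · have hd1 : Nat.gcd (q + p) (q - p) ∣ 2 * q := by
          have h4 : (q + p) + (q - p) = 2 * q := by omega
          exact h4 ▸ Nat.dvd_add (Nat.gcd_dvd_left _ _) (Nat.gcd_dvd_right _ _)
        have hd2 : Nat.gcd (q + p) (q - p) ∣ 2 * p := by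
          have h4 : (q + p) - (q - p) = 2 * p := by omega
          exact h4 ▸ Nat.dvd_sub (Nat.gcd_dvd_left _ _) (Nat.gcd_dvd_right _ _)
        have h5 := Nat.dvd_gcd hd1 hd2
        rwa [Nat.gcd_mul_left, Nat.gcd_comm q p, hg, mul_one] at h5
    have hrD1 : 1 < r * D := by
      obtain ⟨⟨p₀, q₀⟩, hp₀⟩ := hNE
      obtain ⟨hlt, hab, _, _⟩ := key _ hp₀
      obtain ⟨hp, hq, hg, heq⟩ := hp₀
      by_contra h
      push_neg at h
      have hrD : r * D = 1 := by
        have : 0 < r * D := by positivity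
        omega
      have hr1 : r = 1 := Nat.eq_one_of_mul_eq_one_right hrD
      have hD1 : D = 1 := Nat.eq_one_of_mul_eq_one_left hrD
      dsimp only at heq hlt hp
      rw [hr1, hD1] at heq
      nlinarith
    have hPne : (r * D).primeFactors.Nonempty := Nat.nonempty_primeFactors.mpr hrD1
    set P := (r * D).primeFactors with hP
    set ℓ₀ := P.max' hPne with hl0
    have hl0P : ℓ₀ ∈ P := P.max'_mem hPne
    have hNP : (r ^ 2 * D).primeFactors = P := by
      rw [hP, Nat.primeFactors_mul (pow_ne_zero 2 hr.ne') hD.ne',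
          Nat.primeFactors_pow r two_ne_zero,
          ← Nat.primeFactors_mul hr.ne' hD.ne']
    have notboth : ∀ ℓ ∈ P, ∀ a b : ℕ, Nat.gcd a b ∣ 2 → ¬(mm ℓ ∣ a ∧ mm ℓ ∣ b) := by
      rintro ℓ hℓ a b hgab ⟨h1, h2⟩
      have hdvd : mm ℓ ∣ 2 := dvd_trans (Nat.dvd_gcd h1 h2) hgab
      have hpr : ℓ.Prime := Nat.prime_of_mem_primeFactors hℓ
      have h2le := hpr.two_le
      by_cases h : ℓ = 2
      · simp only [mm, if_pos h] at hdvd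
        omega
      · simp only [mm, if_neg h] at hdvd
        have := Nat.le_of_dvd (by norm_num) hdvd
        omega
    set f : ℕ × ℕ → Finset ℕ := fun pq =>
      if mm ℓ₀ ∣ (pq.2 + pq.1) then P.filter (fun ℓ => mm ℓ ∣ (pq.2 - pq.1))
      else P.filter (fun ℓ => mm ℓ ∣ (pq.2 + pq.1)) with hf
    have hmain : S.ncard ≤ (↑(P.erase ℓ₀).powerset : Set (Finset ℕ)).ncard := by
      apply Set.ncard_le_ncard_of_injOn f ?_ ?_ (Finset.finite_toSet _)
      · -- maps into
        intro pq hpq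
        obtain ⟨hlt, hab, hgab, hpar⟩ := key pq hpq
        rw [Finset.mem_coe, Finset.mem_powerset, Finset.subset_erase]
        simp only [hf]
        split_ifs with h
        · refine ⟨Finset.filter_subset _ _, fun hmem => ?_⟩
          exact notboth ℓ₀ hl0P _ _ hgab ⟨h, (Finset.mem_filter.mp hmem).2⟩
        · exact ⟨Finset.filter_subset _ _, fun hmem => h (Finset.mem_filter.mp hmem).2⟩
      · -- injectivity
        rintro ⟨p, q⟩ hpq ⟨p', q'⟩ hpq' heq
        obtain ⟨hlt, hab, hgab, hpar⟩ := key _ hpq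
        obtain ⟨hlt', hab', hgab', hpar'⟩ := key _ hpq'
        have hp : 0 < p := hpq.1
        have hp' : 0 < p' := hpq'.1
        simp only [hf] at heq
        dsimp only at heq hlt hab hgab hpar hlt' hab' hgab' hpar' hp hp'
        have hsub : q - p ≠ 0 := by omega
        have hsub' : q' - p' ≠ 0 := by omega
        have hsum0 : q + p ≠ 0 := by omega
        -- reversed products
        have hba : (q - p) * (q + p) = r ^ 2 * D := by rw [mul_comm]; exact hab
        have hba' : (q' - p') * (q' + p') = r ^ 2 * D := by rw [mul_comm]; exact hab'
        have hgba : Nat.gcd (q - p) (q + p) ∣ 2 := Nat.gcd_comm _ _ ▸ hgab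
        have hgba' : Nat.gcd (q' - p') (q' + p') ∣ 2 := Nat.gcd_comm _ _ ▸ hgab'
        split_ifs at heq with h1 h2 h2
        · -- both: sets of a-side
          have hiff := filter_eq_iff heq
          have hiff' : ∀ ℓ ∈ (r ^ 2 * D).primeFactors,
              (mm ℓ ∣ (q - p) ↔ mm ℓ ∣ (q' - p')) := by
            rw [hNP]; exact hiff
          have haa : q - p = q' - p' :=
            det hN0 hba hba' hgba hgba' (by omega) (by omega) hiff'
          have hbb : q + p = q' + p' := by
            have := hab.trans hab'.symm
            rw [← haa] at this
            exact Nat.eq_of_mul_eq_mul_right (by omega) this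
          exact Prod.ext (by omega) (by omega)
        · -- mixed: a-side = b'-side
          have hiff := filter_eq_iff heq
          have hiff' : ∀ ℓ ∈ (r ^ 2 * D).primeFactors,
              (mm ℓ ∣ (q - p) ↔ mm ℓ ∣ (q' + p')) := by
            rw [hNP]; exact hiff
          have hab2 : q - p = q' + p' :=
            det hN0 hba hab' hgba hgab' (by omega) (by omega) hiff'
          -- contradiction: q-p < q+p, q'-p' < q'+p'
          have hc1 : q - p < q + p := by omega
          have hc2 : q' - p' < q' + p' := by omega
          have : (q + p) * (q - p) = (q' + p') * (q' - p') := hab.trans hab'.symm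
          rw [← hab2] at this
          have hbb : q + p = q' - p' := by
            rw [mul_comm (q-p) _] at this
            exact Nat.eq_of_mul_eq_mul_right (by omega) this
          omega
        · -- mixed: b-side = a'-side
          have hiff := filter_eq_iff heq
          have hiff' : ∀ ℓ ∈ (r ^ 2 * D).primeFactors,
              (mm ℓ ∣ (q + p) ↔ mm ℓ ∣ (q' - p')) := by
            rw [hNP]; exact hiff
          have hab2 : q + p = q' - p' :=
            det hN0 hab hba' hgab hgba' (by omega) (by omega) hiff'
          have hc1 : q - p < q + p := by omega
          have hc2 : q' - p' < q' + p' := by omega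
          have : (q + p) * (q - p) = (q' + p') * (q' - p') := hab.trans hab'.symm
          rw [hab2, mul_comm (q' + p') _] at this
          have hbb : q - p = q' + p' := Nat.eq_of_mul_eq_mul_left (by omega) this
          omega
        · -- both: sets of b-side
          have hiff := filter_eq_iff heq
          have hiff' : ∀ ℓ ∈ (r ^ 2 * D).primeFactors,
              (mm ℓ ∣ (q + p) ↔ mm ℓ ∣ (q' + p')) := by
            rw [hNP]; exact hiff
          have hbb : q + p = q' + p' :=
            det hN0 hab hab' hgab hgab' (by omega) (by omega) hiff'
          have haa : q - p = q' - p' := by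
            have := hab.trans hab'.symm
            rw [← hbb] at this
            exact Nat.eq_of_mul_eq_mul_left (by omega) this
          exact Prod.ext (by omega) (by omega)
    calc S.ncard ≤ (↑(P.erase ℓ₀).powerset : Set (Finset ℕ)).ncard := hmain
      _ = 2 ^ (P.card - 1) := by
          rw [Set.ncard_coe_finset, Finset.card_powerset, Finset.card_erase_of_mem hl0P]
end

section
/- For positive integers p, q, r and squarefree D with p² + Dr² = q², gcd(p,q) = 1, and p/q ≤ 1/2, the lattice Ω = [[q, p],[0, r√D]]·ℤ² is well-rounded: its two basis columns both have squared length q² which is the minimal squared norm of a nonzero lattice vector. -/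
lemma key_int (D p q r : ℤ) (hp : 1 ≤ p) (hq : 1 ≤ q) (hr : 1 ≤ r) (hD : 1 ≤ D)
    (hpq : p ^ 2 + D * r ^ 2 = q ^ 2) (h2 : 2 * p ≤ q) (x y : ℤ)
    (hxy : ¬(x = 0 ∧ y = 0)) : q ^ 2 ≤ (x * q + y * p) ^ 2 + y ^ 2 * (D * r ^ 2) := by
  by_cases hy : y = 0
  · subst hy
    have hx : x ≠ 0 := fun h => hxy ⟨h, rfl⟩
    have hx2 : 1 ≤ x ^ 2 := by rcases lt_or_gt_of_ne hx with h | h <;> nlinarith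
    nlinarith [sq_nonneg x]
  · have hy1 : 1 ≤ |y| := Int.one_le_abs hy
    rcases eq_or_lt_of_le hy1 with h1 | h1
    · have : y = 1 ∨ y = -1 := by
        rcases (abs_eq (by norm_num : (0:ℤ) ≤ 1)).mp h1.symm with h | h
        · exact Or.inl h
        · exact Or.inr h
      rcases this with h | h <;> subst h <;>
        rcases lt_trichotomy x 0 with hx | hx | hx
      · have hx1 : x ≤ -1 := by omega
        have h3 : x * q ≤ -q := by nlinarith
        nlinarith [mul_nonneg (show (0:ℤ) ≤ -(x * q) by linarith)
          (show (0:ℤ) ≤ -(x * q + 2 * p) by linarith)]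
      · subst hx; nlinarith
      · have hx1 : 1 ≤ x := hx
        have h3 : q ≤ x * q := le_mul_of_one_le_left (by linarith) hx1
        nlinarith [mul_nonneg (show (0:ℤ) ≤ x * q by linarith)
          (show (0:ℤ) ≤ x * q + 2 * p by linarith)]
      · have hx1 : x ≤ -1 := by omega
        have h3 : x * q ≤ -q := by nlinarith
        nlinarith [mul_nonneg (show (0:ℤ) ≤ -(x * q) by linarith)
          (show (0:ℤ) ≤ -(x * q - 2 * p) by linarith)]
      · subst hx; nlinarith
      · have hx1 : 1 ≤ x := hx
        have h3 : q ≤ x * q := le_mul_of_one_le_left (by linarith) hx1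
        nlinarith [mul_nonneg (show (0:ℤ) ≤ x * q by linarith)
          (show (0:ℤ) ≤ x * q - 2 * p by linarith)]
    · have hy4 : 4 ≤ y ^ 2 := by
        have h2' : 2 ≤ |y| := h1
        nlinarith [sq_abs y]
      nlinarith [sq_nonneg (x * q + y * p),
        mul_le_mul_of_nonneg_right hy4 (show (0:ℤ) ≤ D * r ^ 2 by positivity),
        mul_le_mul h2 h2 (by linarith) (by linarith)]


/-- For `p² + Dr² = q²`, `gcd(p,q) = 1`, `p/q ≤ 1/2`, the lattice
`Ω = [[q, p],[0, r√D]]·ℤ²` is well-rounded: its basis columns `v₁ = (q, 0)` and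
`v₂ = (p, r√D)` are linearly independent, both of squared norm `q²`, which is the
minimal squared norm of a nonzero lattice vector. -/
theorem stmt_9 (D p q r : ℕ) (hD : 0 < D) (hsf : Squarefree D)
    (hp : 0 < p) (hq : 0 < q) (hr : 0 < r)
    (hpq : p ^ 2 + D * r ^ 2 = q ^ 2) (hcop : Nat.gcd p q = 1) (h2 : 2 * p ≤ q)
    (v₁ v₂ : EuclideanSpace ℝ (Fin 2))
    (hv₁ : v₁ = ![(q : ℝ), 0])
    (hv₂ : v₂ = ![(p : ℝ), r * Real.sqrt D]) :
    LinearIndependent ℝ ![v₁, v₂] ∧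
      ‖v₁‖ ^ 2 = (q : ℝ) ^ 2 ∧ ‖v₂‖ ^ 2 = (q : ℝ) ^ 2 ∧
      (∀ x y : ℤ, ¬(x = 0 ∧ y = 0) → (q : ℝ) ^ 2 ≤ ‖x • v₁ + y • v₂‖ ^ 2) := by
  have hS : Real.sqrt D ^ 2 = (D : ℝ) := Real.sq_sqrt (by positivity)
  have hSpos : 0 < Real.sqrt D := Real.sqrt_pos.mpr (by exact_mod_cast hD)
  have hnorm : ∀ w : EuclideanSpace ℝ (Fin 2), ‖w‖ ^ 2 = (w 0) ^ 2 + (w 1) ^ 2 := by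
    intro w
    rw [EuclideanSpace.norm_eq, Real.sq_sqrt (by positivity)]
    simp [Fin.sum_univ_two, sq_abs]
  have hpqR : (p : ℝ) ^ 2 + D * r ^ 2 = (q : ℝ) ^ 2 := by exact_mod_cast hpq
  have h10 : v₁ 0 = (q : ℝ) := by rw [hv₁]; rfl
  have h11 : v₁ 1 = 0 := by rw [hv₁]; rfl
  have h20 : v₂ 0 = (p : ℝ) := by rw [hv₂]; rfl
  have h21 : v₂ 1 = r * Real.sqrt D := by rw [hv₂]; rfl
  refine ⟨?_, ?_, ?_, ?_⟩
  · rw [LinearIndependent.pair_iff]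
    intro s t hst
    have e1 : s * v₁ 0 + t * v₂ 0 = 0 := by
      have := congrArg (fun w => w 0) hst
      simpa using this
    have e2 : s * v₁ 1 + t * v₂ 1 = 0 := by
      have := congrArg (fun w => w 1) hst
      simpa using this
    rw [h10, h20] at e1
    rw [h11, h21] at e2
    have ht : t = 0 := by
      have hrS : (r : ℝ) * Real.sqrt D ≠ 0 := by positivity
      have : t * ((r : ℝ) * Real.sqrt D) = 0 := by linarith
      exact (mul_eq_zero.mp this).resolve_right hrS
    subst ht
    have hs : s = 0 := by
      have hq' : (q : ℝ) ≠ 0 := by positivity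
      have : s * (q : ℝ) = 0 := by linarith
      exact (mul_eq_zero.mp this).resolve_right hq'
    exact ⟨hs, rfl⟩
  · rw [hnorm, h10, h11]; ring
  · rw [hnorm, h20, h21]
    nlinarith [hS, hpqR]
  · intro x y hxy
    have hkey := key_int D p q r (by exact_mod_cast hp) (by exact_mod_cast hq)
      (by exact_mod_cast hr) (by exact_mod_cast hD) (by exact_mod_cast hpq)
      (by exact_mod_cast h2) x y hxy
    have e0 : (x • v₁ + y • v₂) 0 = x * q + y * p := by
      simp [PiLp.add_apply, PiLp.smul_apply, h10, h20, zsmul_eq_mul]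
    have e1 : (x • v₁ + y • v₂) 1 = y * (r * Real.sqrt D) := by
      simp [PiLp.add_apply, PiLp.smul_apply, h11, h21, zsmul_eq_mul]
    rw [hnorm, e0, e1]
    have hkR : (q : ℝ) ^ 2 ≤ ((x : ℝ) * q + y * p) ^ 2 + (y : ℝ) ^ 2 * (D * r ^ 2) := by
      exact_mod_cast hkey
    have e2 : ((y : ℝ) * (r * Real.sqrt D)) ^ 2 = (y : ℝ) ^ 2 * (D * r ^ 2) := by
      rw [mul_pow, mul_pow, hS]; ring
    linarith
end

section
/- Two full-rank well-rounded planar lattices with minimal bases making angles θ₁, θ₂ ∈ [π/3, π/2] respectively are similar (one is obtained from the other by a rotation-scaling, i.e. Λ₂ = αUΛ₁ with α > 0 and U orthogonal) if and only if θ₁ = θ₂. -/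
open RealInnerProductSpace

private lemma classify_aux (t : ℝ) (ht0 : 0 ≤ t) (ht : t ≤ 1/2) (a b : ℤ)
    (h : (a:ℝ)^2 + (b:ℝ)^2 + 2*a*b*t = 1) :
    (a = 1 ∧ b = 0) ∨ (a = -1 ∧ b = 0) ∨ (a = 0 ∧ b = 1) ∨ (a = 0 ∧ b = -1) ∨
      (a = 1 ∧ b = -1 ∧ t = 1/2) ∨ (a = -1 ∧ b = 1 ∧ t = 1/2) := by
  have hb : (a:ℝ)^2 + (b:ℝ)^2 ≤ 2 := by
    nlinarith [mul_nonneg ht0 (sq_nonneg ((a:ℝ)+b)),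
      mul_nonneg (by linarith : (0:ℝ) ≤ 1/2 - t) (by positivity : (0:ℝ) ≤ (a:ℝ)^2 + (b:ℝ)^2)]
  have hai : a^2 + b^2 ≤ 2 := by exact_mod_cast hb
  have ha1 : -1 ≤ a := by nlinarith [sq_nonneg a, sq_nonneg b]
  have ha2 : a ≤ 1 := by nlinarith [sq_nonneg a, sq_nonneg b]
  have hb1 : -1 ≤ b := by nlinarith [sq_nonneg a, sq_nonneg b]
  have hb2 : b ≤ 1 := by nlinarith [sq_nonneg a, sq_nonneg b]
  interval_cases a <;> interval_cases b
  all_goals push_cast at h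
  all_goals (try norm_num at h ⊢)
  all_goals linarith

private lemma inner_comb (x y : EuclideanSpace ℝ (Fin 2)) (a b c d : ℤ) :
    ⟪a • x + b • y, c • x + d • y⟫ =
      (a:ℝ)*(c:ℝ) * ⟪x, x⟫ + ((a:ℝ)*(d:ℝ) + (b:ℝ)*(c:ℝ)) * ⟪x, y⟫ + (b:ℝ)*(d:ℝ) * ⟪y, y⟫ := by
  rw [← Int.cast_smul_eq_zsmul ℝ a, ← Int.cast_smul_eq_zsmul ℝ b,
    ← Int.cast_smul_eq_zsmul ℝ c, ← Int.cast_smul_eq_zsmul ℝ d]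
  simp only [inner_add_left, inner_add_right, real_inner_smul_left, real_inner_smul_right]
  rw [real_inner_comm y x]; ring

set_option maxHeartbeats 2000000 in
/-- Two full-rank well-rounded planar lattices, with minimal bases making angles
`θ₁, θ₂ ∈ [π/3, π/2]`, are similar (`Λ₂ = α U Λ₁` with `α > 0` and `U` orthogonal)
if and only if `θ₁ = θ₂`. -/
theorem stmt_11 (x₁ y₁ x₂ y₂ : EuclideanSpace ℝ (Fin 2))
    (Λ₁ Λ₂ : Set (EuclideanSpace ℝ (Fin 2)))
    (hΛ₁ : Λ₁ = {v | ∃ a b : ℤ, v = a • x₁ + b • y₁})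
    (hΛ₂ : Λ₂ = {v | ∃ a b : ℤ, v = a • x₂ + b • y₂})
    (hli₁ : LinearIndependent ℝ ![x₁, y₁]) (hli₂ : LinearIndependent ℝ ![x₂, y₂])
    (hnorm₁ : ‖x₁‖ = ‖y₁‖) (hnorm₂ : ‖x₂‖ = ‖y₂‖)
    (hmin₁ : ∀ v ∈ Λ₁, v ≠ 0 → ‖x₁‖ ≤ ‖v‖)
    (hmin₂ : ∀ v ∈ Λ₂, v ≠ 0 → ‖x₂‖ ≤ ‖v‖)
    (θ₁ θ₂ : ℝ)
    (hθ₁ : θ₁ = InnerProductGeometry.angle x₁ y₁)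
    (hθ₂ : θ₂ = InnerProductGeometry.angle x₂ y₂)
    (hθ₁mem : θ₁ ∈ Set.Icc (Real.pi / 3) (Real.pi / 2))
    (hθ₂mem : θ₂ ∈ Set.Icc (Real.pi / 3) (Real.pi / 2)) :
    (∃ α : ℝ, 0 < α ∧ ∃ U : EuclideanSpace ℝ (Fin 2) ≃ₗᵢ[ℝ] EuclideanSpace ℝ (Fin 2),
        Λ₂ = (fun v => α • U v) '' Λ₁) ↔ θ₁ = θ₂ := by
  have pi_pos := Real.pi_pos
  have hx₁ : x₁ ≠ 0 := by simpa using hli₁.ne_zero 0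
  have hx₂ : x₂ ≠ 0 := by simpa using hli₂.ne_zero 0
  have hm₁ : (0:ℝ) < ‖x₁‖ := norm_pos_iff.2 hx₁
  have hm₂ : (0:ℝ) < ‖x₂‖ := norm_pos_iff.2 hx₂
  -- cos facts
  have hcos₁ : ⟪x₁, y₁⟫ = ‖x₁‖^2 * Real.cos θ₁ := by
    rw [hθ₁, InnerProductGeometry.cos_angle, ← hnorm₁]
    field_simp
  have hcos₂ : ⟪x₂, y₂⟫ = ‖x₂‖^2 * Real.cos θ₂ := by
    rw [hθ₂, InnerProductGeometry.cos_angle, ← hnorm₂]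
    field_simp
  have ht₁0 : 0 ≤ Real.cos θ₁ :=
    Real.cos_nonneg_of_mem_Icc ⟨by linarith [hθ₁mem.1], hθ₁mem.2⟩
  have ht₂0 : 0 ≤ Real.cos θ₂ :=
    Real.cos_nonneg_of_mem_Icc ⟨by linarith [hθ₂mem.1], hθ₂mem.2⟩
  have ht₁half : Real.cos θ₁ ≤ 1/2 := by
    have := Real.cos_le_cos_of_nonneg_of_le_pi (by positivity)
      (by linarith [hθ₁mem.2] : θ₁ ≤ Real.pi) hθ₁mem.1
    rwa [Real.cos_pi_div_three] at this
  have ht₂half : Real.cos θ₂ ≤ 1/2 := by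
    have := Real.cos_le_cos_of_nonneg_of_le_pi (by positivity)
      (by linarith [hθ₂mem.2] : θ₂ ≤ Real.pi) hθ₂mem.1
    rwa [Real.cos_pi_div_three] at this
  have hxx₂ : ⟪x₂, x₂⟫ = ‖x₂‖^2 := real_inner_self_eq_norm_sq x₂
  have hyy₂ : ⟪y₂, y₂⟫ = ‖x₂‖^2 := by rw [real_inner_self_eq_norm_sq, hnorm₂]
  constructor
  · rintro ⟨α, hα, U, hU⟩
    have hUx : ∀ v : EuclideanSpace ℝ (Fin 2), ‖α • U v‖ = α * ‖v‖ := fun v => by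
      rw [norm_smul, U.norm_map, Real.norm_eq_abs, abs_of_pos hα]
    have hinner : ∀ u v : EuclideanSpace ℝ (Fin 2),
        ⟪α • U u, α • U v⟫ = α^2 * ⟪u, v⟫ := fun u v => by
      rw [real_inner_smul_left, real_inner_smul_right, U.inner_map_map]; ring
    have hx₁mem : x₁ ∈ Λ₁ := by rw [hΛ₁]; exact ⟨1, 0, by simp⟩
    have hy₁mem : y₁ ∈ Λ₁ := by rw [hΛ₁]; exact ⟨0, 1, by simp⟩
    have hx'mem : α • U x₁ ∈ Λ₂ := by rw [hU]; exact ⟨x₁, hx₁mem, rfl⟩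
    have hy'mem : α • U y₁ ∈ Λ₂ := by rw [hU]; exact ⟨y₁, hy₁mem, rfl⟩
    have hx'ne : α • U x₁ ≠ 0 := by
      rw [← norm_pos_iff, hUx]; exact mul_pos hα hm₁
    have h1 : ‖x₂‖ ≤ α * ‖x₁‖ := by
      have := hmin₂ _ hx'mem hx'ne; rwa [hUx] at this
    have h2 : α * ‖x₁‖ ≤ ‖x₂‖ := by
      have hx₂mem : x₂ ∈ Λ₂ := by rw [hΛ₂]; exact ⟨1, 0, by simp⟩
      rw [hU] at hx₂mem
      obtain ⟨w, hw, hw2⟩ := hx₂mem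
      have hwne : w ≠ 0 := by
        rintro rfl
        simp only [map_zero, smul_zero] at hw2
        exact hx₂ hw2.symm
      have hle := hmin₁ w hw hwne
      calc α * ‖x₁‖ ≤ α * ‖w‖ := by
            exact mul_le_mul_of_nonneg_left hle hα.le
        _ = ‖x₂‖ := by rw [← hw2, hUx]
    have hm : ‖x₂‖ = α * ‖x₁‖ := le_antisymm h1 h2
    -- coordinates
    obtain ⟨a, b, hab⟩ : ∃ a b : ℤ, α • U x₁ = a • x₂ + b • y₂ := by
      have := hx'mem; rw [hΛ₂] at this; exact this
    obtain ⟨c, d, hcd⟩ : ∃ c d : ℤ, α • U y₁ = c • x₂ + d • y₂ := by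
      have := hy'mem; rw [hΛ₂] at this; exact this
    have hm₂sq : (0:ℝ) < ‖x₂‖^2 := by positivity
    have hP : (0:ℝ) < (α * ‖x₁‖)^2 := by positivity
    have e1 : (a:ℝ)^2 + (b:ℝ)^2 + 2*a*b*Real.cos θ₂ = 1 := by
      have h := congrArg (fun v => (⟪v, v⟫ : ℝ)) hab
      simp only [inner_comb, hxx₂, hyy₂, hcos₂] at h
      rw [real_inner_self_eq_norm_sq, hUx, hm] at h
      have := mul_left_cancel₀ (a := (α * ‖x₁‖)^2) hP.ne' (b := (a:ℝ)^2 + (b:ℝ)^2 + 2*a*b*Real.cos θ₂) (c := 1) (by linear_combination -h)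
      linarith [this]
    have e2 : (c:ℝ)^2 + (d:ℝ)^2 + 2*c*d*Real.cos θ₂ = 1 := by
      have h := congrArg (fun v => (⟪v, v⟫ : ℝ)) hcd
      simp only [inner_comb, hxx₂, hyy₂, hcos₂] at h
      rw [real_inner_self_eq_norm_sq, hUx, hm, ← hnorm₁] at h
      have := mul_left_cancel₀ (a := (α * ‖x₁‖)^2) hP.ne' (b := (c:ℝ)^2 + (d:ℝ)^2 + 2*c*d*Real.cos θ₂) (c := 1) (by linear_combination -h)
      linarith [this]
    have e3 : Real.cos θ₁ = ((a:ℝ)*c + b*d) + ((a:ℝ)*d + b*c) * Real.cos θ₂ := by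
      have h : ⟪α • U x₁, α • U y₁⟫ =
          (a:ℝ)*(c:ℝ) * ⟪x₂, x₂⟫ + ((a:ℝ)*(d:ℝ) + (b:ℝ)*(c:ℝ)) * ⟪x₂, y₂⟫
            + (b:ℝ)*(d:ℝ) * ⟪y₂, y₂⟫ := by rw [hab, hcd, inner_comb]
      rw [hinner, hcos₁, hxx₂, hyy₂, hcos₂, hm] at h
      exact mul_left_cancel₀ hP.ne' (by linear_combination h)
    have hcc : Real.cos θ₁ = Real.cos θ₂ := by
      rcases classify_aux _ ht₂0 ht₂half a b e1 with
          ⟨rfl, rfl⟩ | ⟨rfl, rfl⟩ | ⟨rfl, rfl⟩ | ⟨rfl, rfl⟩ | ⟨rfl, rfl, h5⟩ | ⟨rfl, rfl, h5⟩ <;>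
        rcases classify_aux _ ht₂0 ht₂half c d e2 with
          ⟨rfl, rfl⟩ | ⟨rfl, rfl⟩ | ⟨rfl, rfl⟩ | ⟨rfl, rfl⟩ | ⟨rfl, rfl, h6⟩ | ⟨rfl, rfl, h6⟩ <;>
        push_cast at e3 <;> linarith
    exact Real.injOn_cos ⟨by linarith [hθ₁mem.1], by linarith [hθ₁mem.2]⟩
      ⟨by linarith [hθ₂mem.1], by linarith [hθ₂mem.2]⟩ hcc
  · intro hθ
    set α : ℝ := ‖x₂‖ / ‖x₁‖ with hαdef
    have hα : 0 < α := div_pos hm₂ hm₁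
    have hcard : Fintype.card (Fin 2) = Module.finrank ℝ (EuclideanSpace ℝ (Fin 2)) := by
      simp [finrank_euclideanSpace_fin]
    let b₁ : Module.Basis (Fin 2) ℝ (EuclideanSpace ℝ (Fin 2)) :=
      basisOfLinearIndependentOfCardEqFinrank hli₁ hcard
    let b₂ : Module.Basis (Fin 2) ℝ (EuclideanSpace ℝ (Fin 2)) :=
      basisOfLinearIndependentOfCardEqFinrank hli₂ hcard
    have hb₁0 : b₁ 0 = x₁ := by
      simp [b₁, coe_basisOfLinearIndependentOfCardEqFinrank]
    have hb₁1 : b₁ 1 = y₁ := by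
      simp [b₁, coe_basisOfLinearIndependentOfCardEqFinrank]
    have hb₂0 : b₂ 0 = x₂ := by
      simp [b₂, coe_basisOfLinearIndependentOfCardEqFinrank]
    have hb₂1 : b₂ 1 = y₂ := by
      simp [b₂, coe_basisOfLinearIndependentOfCardEqFinrank]
    let f : EuclideanSpace ℝ (Fin 2) ≃ₗ[ℝ] EuclideanSpace ℝ (Fin 2) :=
      b₁.equiv b₂ (Equiv.refl _)
    have hf₀ : f x₁ = x₂ := by
      have h := b₁.equiv_apply 0 b₂ (Equiv.refl _)
      simp only [Equiv.refl_apply, hb₁0, hb₂0] at h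
      exact h
    have hf₁ : f y₁ = y₂ := by
      have h := b₁.equiv_apply 1 b₂ (Equiv.refl _)
      simp only [Equiv.refl_apply, hb₁1, hb₂1] at h
      exact h
    have hyy₁ : ⟪y₁, y₁⟫ = ‖x₁‖^2 := by rw [real_inner_self_eq_norm_sq, hnorm₁]
    have hxx₁ : ⟪x₁, x₁⟫ = ‖x₁‖^2 := real_inner_self_eq_norm_sq x₁
    have hα2 : α^2 * ‖x₁‖^2 = ‖x₂‖^2 := by
      rw [hαdef]; field_simp
    have k00 : ⟪f x₁, f x₁⟫ = α^2 * ⟪x₁, x₁⟫ := by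
      rw [hf₀, hxx₂, hxx₁]; linarith [hα2]
    have k11 : ⟪f y₁, f y₁⟫ = α^2 * ⟪y₁, y₁⟫ := by
      rw [hf₁, hyy₂, hyy₁]; linarith [hα2]
    have k01 : ⟪f x₁, f y₁⟫ = α^2 * ⟪x₁, y₁⟫ := by
      rw [hf₀, hf₁, hcos₂, hcos₁, ← hθ]
      linear_combination (-Real.cos θ₁) * hα2
    have k10 : ⟪f y₁, f x₁⟫ = α^2 * ⟪y₁, x₁⟫ := by
      rw [real_inner_comm (f x₁) (f y₁), real_inner_comm x₁ y₁]; exact k01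
    have hkey : ∀ u v : EuclideanSpace ℝ (Fin 2), ⟪f u, f v⟫ = α^2 * ⟪u, v⟫ := by
      intro u v
      have hu := b₁.sum_repr u
      have hv := b₁.sum_repr v
      rw [Fin.sum_univ_two, hb₁0, hb₁1] at hu hv
      rw [← hu, ← hv]
      simp only [map_add, map_smul, inner_add_left, inner_add_right,
        real_inner_smul_left, real_inner_smul_right, k00, k01, k10, k11]
      ring
    let g : EuclideanSpace ℝ (Fin 2) ≃ₗ[ℝ] EuclideanSpace ℝ (Fin 2) :=
      f.trans (LinearEquiv.smulOfNeZero ℝ _ α⁻¹ (inv_ne_zero hα.ne'))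
    have hgdef : ∀ v, g v = α⁻¹ • f v := fun v => rfl
    have hg : ∀ u v : EuclideanSpace ℝ (Fin 2), ⟪g u, g v⟫ = ⟪u, v⟫ := by
      intro u v
      rw [hgdef, hgdef, real_inner_smul_left, real_inner_smul_right, hkey]
      field_simp
    refine ⟨α, hα, g.isometryOfInner hg, ?_⟩
    have hmap : ∀ v, α • (g.isometryOfInner hg) v = f v := by
      intro v
      rw [LinearEquiv.coe_isometryOfInner]
      show α • (α⁻¹ • f v) = f v
      rw [smul_smul, mul_inv_cancel₀ hα.ne', one_smul]
    ext v
    simp only [hΛ₂, hΛ₁, Set.mem_setOf_eq, Set.mem_image]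
    constructor
    · rintro ⟨a, b, rfl⟩
      refine ⟨a • x₁ + b • y₁, ⟨a, b, rfl⟩, ?_⟩
      rw [hmap]
      simp [map_add, map_zsmul, hf₀, hf₁]
    · rintro ⟨w, ⟨a, b, rfl⟩, rfl⟩
      refine ⟨a, b, ?_⟩
      rw [hmap]
      simp [map_add, map_zsmul, hf₀, hf₁]
end

section
/- Let D ≡ 3 (mod 4) be a positive squarefree integer, K = ℚ(√(−D)), and I ⊂ O_K an ideal with canonical basis a, b+δ (δ = −√(−D), b < a, a | b²+D). If the associated lattice Λ = [[a, b],[0, √D]]·ℤ² ⊂ ℝ² is well-rounded, then there exist coprime positive integers p, q with p² + D = q² and p/q ≤ 1/2 (in particular, D has a divisor d with √(D/3) ≤ d < √D). -/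
open scoped RealInnerProductSpace

private lemma wr_aux_bound (M S r t : ℝ) (hM : 0 < M) (hS : 2*|S| ≤ M)
    (hr : |r| ≤ 1/2) (ht : |t| ≤ 1/2) : r^2 * M + 2*(r*t)*S + t^2 * M < M := by
  have hr2 : r^2 ≤ 1/4 := by rw [← sq_abs]; nlinarith [abs_nonneg r]
  have ht2 : t^2 ≤ 1/4 := by rw [← sq_abs]; nlinarith [abs_nonneg t]
  have hcross : r * t * S ≤ |r| * |t| * |S| := by
    calc r * t * S ≤ |r * t * S| := le_abs_self _
    _ = |r| * |t| * |S| := by rw [abs_mul, abs_mul]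
  have hrt : |r| * |t| ≤ (1/2) * (1/2) := mul_le_mul hr ht (abs_nonneg t) (by norm_num)
  have h1 : r^2 * M ≤ (1/4) * M := by nlinarith
  have h2 : t^2 * M ≤ (1/4) * M := by nlinarith
  have h3 : |r| * |t| * |S| ≤ (1/4) * |S| := by nlinarith [abs_nonneg S]
  nlinarith [abs_nonneg S]

set_option maxHeartbeats 4000000 in
/-- Let `D ≡ 3 (mod 4)` be positive squarefree, and let `a, b` be the canonical basis
data of an ideal of `ℤ[√(-D)]` (`b < a`, `a ∣ b² + D`). If the associated lattice
`Λ = [[a, b],[0, √D]]·ℤ²` is well-rounded, then there are coprime positive integers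
`p, q` with `p² + D = q²` and `p/q ≤ 1/2`. -/
theorem stmt_15 (D : ℕ) (hD : 0 < D) (hsf : Squarefree D) (hmod : D % 4 = 3)
    (a b : ℕ) (ha : 0 < a) (hba : b < a) (hdvd : a ∣ b ^ 2 + D)
    (u w : EuclideanSpace ℝ (Fin 2))
    (hu : u = ![(a : ℝ), 0]) (hw : w = ![(b : ℝ), Real.sqrt D])
    (Λ : Set (EuclideanSpace ℝ (Fin 2)))
    (hΛ : Λ = {v | ∃ x y : ℤ, v = x • u + y • w})
    (hWR : ∃ v₁ ∈ Λ, ∃ v₂ ∈ Λ, LinearIndependent ℝ ![v₁, v₂] ∧ ‖v₁‖ = ‖v₂‖ ∧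
      ∀ v ∈ Λ, v ≠ 0 → ‖v₁‖ ≤ ‖v‖) :
    ∃ p q : ℕ, 0 < p ∧ 0 < q ∧ Nat.gcd p q = 1 ∧ p ^ 2 + D = q ^ 2 ∧ 2 * p ≤ q := by
  obtain ⟨v₁, hv₁Λ, v₂, hv₂Λ, hind, hnrm, hmin⟩ := hWR
  have hrel : ∀ s t : ℝ, s • v₁ + t • v₂ = 0 → s = 0 ∧ t = 0 :=
    LinearIndependent.pair_iff.mp hind
  rw [hΛ] at hv₁Λ hv₂Λ
  obtain ⟨x₁, y₁, hv₁⟩ := hv₁Λ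
  obtain ⟨x₂, y₂, hv₂⟩ := hv₂Λ
  have hDR : (0:ℝ) < (D:ℝ) := by exact_mod_cast hD
  have hsq : Real.sqrt D * Real.sqrt D = (D:ℝ) := Real.mul_self_sqrt hDR.le
  have haR : (0:ℝ) < (a:ℝ) := by exact_mod_cast ha
  have hsqrtpos : 0 < Real.sqrt D := Real.sqrt_pos.mpr hDR
  have hv₁R : v₁ = (x₁:ℝ) • u + (y₁:ℝ) • w := by
    rw [hv₁, Int.cast_smul_eq_zsmul, Int.cast_smul_eq_zsmul]
  have hv₂R : v₂ = (x₂:ℝ) • u + (y₂:ℝ) • w := by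
    rw [hv₂, Int.cast_smul_eq_zsmul, Int.cast_smul_eq_zsmul]
  -- coordinates
  have hc0 : ∀ x y : ℝ, (x • u + y • w) 0 = x * a + y * b := by
    intro x y; simp [hu, hw]
  have hc1 : ∀ x y : ℝ, (x • u + y • w) 1 = y * Real.sqrt D := by
    intro x y; simp [hu, hw]
  -- inner products
  have hinner : ∀ x y x' y' : ℝ,
      ⟪x • u + y • w, x' • u + y' • w⟫ = (x*a + y*b) * (x'*a + y'*b) + D * (y * y') := by
    intro x y x' y'
    simp [PiLp.inner_apply, RCLike.inner_apply, Fin.sum_univ_two, PiLp.add_apply,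
      PiLp.smul_apply, hu, hw]
    linear_combination (y * y') * hsq
  -- integer quantities
  set E₁ : ℤ := a * x₁ + b * y₁ with hE₁
  set E₂ : ℤ := a * x₂ + b * y₂ with hE₂
  set M : ℤ := E₁^2 + D * y₁^2 with hMd
  set S : ℤ := E₁ * E₂ + D * (y₁ * y₂) with hSd
  set n : ℤ := x₁ * y₂ - x₂ * y₁ with hnd
  have hM1 : ⟪v₁, v₁⟫ = (M:ℝ) := by
    rw [hv₁R, hinner, hMd, hE₁]; push_cast; ring
  have hM2' : ⟪v₂, v₂⟫ = ((E₂^2 + D * y₂^2 : ℤ):ℝ) := by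
    rw [hv₂R, hinner, hE₂]; push_cast; ring
  have hS1 : ⟪v₁, v₂⟫ = (S:ℝ) := by
    rw [hv₁R, hv₂R, hinner, hSd, hE₁, hE₂]; push_cast; ring
  have hMnorm : ‖v₁‖^2 = (M:ℝ) := by rw [← real_inner_self_eq_norm_sq, hM1]
  have hM2Z : E₂^2 + D * y₂^2 = M := by
    have h1 : ⟪v₂, v₂⟫ = (M:ℝ) := by
      rw [real_inner_self_eq_norm_sq, ← hnrm, hMnorm]
    rw [hM2'] at h1
    exact_mod_cast h1
  have hM2 : ⟪v₂, v₂⟫ = (M:ℝ) := by rw [hM2']; exact_mod_cast hM2Z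
  -- v₁ nonzero, M positive
  have hv₁ne : v₁ ≠ 0 := by
    intro h
    have := (hrel 1 0 (by simp [h])).1
    exact one_ne_zero this
  have hMposR : (0:ℝ) < (M:ℝ) := by
    rw [← hMnorm]; exact pow_pos (norm_pos_iff.mpr hv₁ne) 2
  have hMpos : (0:ℤ) < M := by exact_mod_cast hMposR
  -- minimality in integer form
  have hmR : ∀ x y : ℤ, ¬(x = 0 ∧ y = 0) → (M:ℝ) ≤ ‖(x:ℝ) • u + (y:ℝ) • w‖^2 := by
    intro x y hxy
    have hmem : ((x:ℝ) • u + (y:ℝ) • w) ∈ Λ := by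
      rw [hΛ]
      exact ⟨x, y, by rw [Int.cast_smul_eq_zsmul, Int.cast_smul_eq_zsmul]⟩
    have hne : ((x:ℝ) • u + (y:ℝ) • w) ≠ 0 := by
      intro h0
      apply hxy
      have h1 : ((x:ℝ) • u + (y:ℝ) • w) 1 = 0 := by rw [h0]; rfl
      rw [hc1] at h1
      have hy : (y:ℝ) = 0 := by
        rcases mul_eq_zero.mp h1 with h | h
        · exact h
        · exact absurd h hsqrtpos.ne'
      have h2 : ((x:ℝ) • u + (y:ℝ) • w) 0 = 0 := by rw [h0]; rfl
      rw [hc0, hy] at h2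
      have hx : (x:ℝ) = 0 := by
        have : (x:ℝ) * a = 0 := by linarith
        rcases mul_eq_zero.mp this with h | h
        · exact h
        · exact absurd h haR.ne'
      exact ⟨by exact_mod_cast hx, by exact_mod_cast hy⟩
    have h := hmin _ hmem hne
    calc (M:ℝ) = ‖v₁‖^2 := hMnorm.symm
    _ ≤ ‖(x:ℝ) • u + (y:ℝ) • w‖^2 := by
        apply pow_le_pow_left₀ (norm_nonneg v₁) h
  have hmZ : ∀ x y : ℤ, ¬(x = 0 ∧ y = 0) → M ≤ (a * x + b * y)^2 + D * y^2 := by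
    intro x y hxy
    have h := hmR x y hxy
    have h2 : ‖(x:ℝ) • u + (y:ℝ) • w‖^2 = (((a * x + b * y)^2 + D * y^2 : ℤ) : ℝ) := by
      rw [← real_inner_self_eq_norm_sq, hinner]
      push_cast; ring
    rw [h2] at h
    exact_mod_cast h
  -- bound on S : 2|S| ≤ M
  have hSbound : 2 * |S| ≤ M := by
    have hplus : M ≤ 2*M + 2*S := by
      have hne : ¬(x₁ + x₂ = 0 ∧ y₁ + y₂ = 0) := by
        rintro ⟨hx, hy⟩
        have : (1:ℝ) • v₁ + (1:ℝ) • v₂ = 0 := by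
          rw [hv₁R, hv₂R]
          have hx' : (x₂:ℝ) = -(x₁:ℝ) := by exact_mod_cast (by linarith : (x₂:ℤ) = -x₁)
          have hy' : (y₂:ℝ) = -(y₁:ℝ) := by exact_mod_cast (by linarith : (y₂:ℤ) = -y₁)
          rw [hx', hy']; module
        exact one_ne_zero (hrel 1 1 this).1
      have h := hmZ (x₁ + x₂) (y₁ + y₂) hne
      have hexp : (a * (x₁ + x₂) + b * (y₁ + y₂))^2 + D * (y₁ + y₂)^2
          = M + (E₂^2 + D * y₂^2) + 2*S := by
        rw [hMd, hSd, hE₁, hE₂]; ring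
      rw [hexp, hM2Z] at h
      linarith
    have hminus : M ≤ 2*M - 2*S := by
      have hne : ¬(x₁ - x₂ = 0 ∧ y₁ - y₂ = 0) := by
        rintro ⟨hx, hy⟩
        have : (1:ℝ) • v₁ + (-1:ℝ) • v₂ = 0 := by
          rw [hv₁R, hv₂R]
          have hx' : (x₂:ℝ) = (x₁:ℝ) := by exact_mod_cast (by linarith : (x₂:ℤ) = x₁)
          have hy' : (y₂:ℝ) = (y₁:ℝ) := by exact_mod_cast (by linarith : (y₂:ℤ) = y₁)
          rw [hx', hy']; module
        exact one_ne_zero (hrel 1 (-1) this).1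
      have h := hmZ (x₁ - x₂) (y₁ - y₂) hne
      have hexp : (a * (x₁ - x₂) + b * (y₁ - y₂))^2 + D * (y₁ - y₂)^2
          = M + (E₂^2 + D * y₂^2) - 2*S := by
        rw [hMd, hSd, hE₁, hE₂]; ring
      rw [hexp, hM2Z] at h
      linarith
    rcases abs_cases S with ⟨he, _⟩ | ⟨he, _⟩ <;> rw [he] <;> linarith
  -- norm expansion for real combinations of v₁, v₂
  have hcombnorm : ∀ r t : ℝ, ‖r • v₁ + t • v₂‖^2 = r^2 * M + 2*(r*t)*(S:ℝ) + t^2 * M := by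
    intro r t
    rw [← real_inner_self_eq_norm_sq]
    simp only [inner_add_left, inner_add_right, real_inner_smul_left, real_inner_smul_right]
    have hS2 : ⟪v₂, v₁⟫ = (S:ℝ) := by rw [real_inner_comm]; exact hS1
    simp only [hM1, hM2, hS1, hS2]
    ring
  have hSR : 2 * |(S:ℝ)| ≤ (M:ℝ) := by exact_mod_cast hSbound
  -- key: any lattice vector which is a real combination of v₁ v₂ has integer coefficients
  have main : ∀ (α β : ℝ) (X0 Y0 : ℤ),
      (X0:ℝ) • u + (Y0:ℝ) • w = α • v₁ + β • v₂ → ∃ p q : ℤ, α = p ∧ β = q := by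
    intro α β X0 Y0 hcomb
    set p₀ : ℤ := round α with hp₀
    set q₀ : ℤ := round β with hq₀
    set r : ℝ := α - p₀ with hrdef
    set t : ℝ := β - q₀ with htdef
    have hr : |r| ≤ 1/2 := abs_sub_round α
    have ht : |t| ≤ 1/2 := abs_sub_round β
    set X1 : ℤ := X0 - (p₀ * x₁ + q₀ * x₂) with hX1
    set Y1 : ℤ := Y0 - (p₀ * y₁ + q₀ * y₂) with hY1
    have hv' : r • v₁ + t • v₂ = (X1:ℝ) • u + (Y1:ℝ) • w := by
      have e1 : r • v₁ + t • v₂ = (α • v₁ + β • v₂) - ((p₀:ℝ) • v₁ + (q₀:ℝ) • v₂) := by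
        rw [hrdef, htdef]; module
      rw [e1, ← hcomb, hv₁R, hv₂R, hX1, hY1]
      push_cast
      module
    -- the norm of this vector is < M
    have hbnd : ‖r • v₁ + t • v₂‖^2 < (M:ℝ) := by
      rw [hcombnorm r t]
      exact wr_aux_bound _ _ _ _ hMposR hSR hr ht
    by_cases hXY : X1 = 0 ∧ Y1 = 0
    · have hz : r • v₁ + t • v₂ = 0 := by
        rw [hv', hXY.1, hXY.2]; push_cast; simp
      obtain ⟨hr0, ht0⟩ := hrel r t hz
      exact ⟨p₀, q₀, by rw [hrdef] at hr0; linarith, by rw [htdef] at ht0; linarith⟩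
    · exfalso
      have := hmR X1 Y1 hXY
      rw [← hv'] at this
      linarith
  -- n is nonzero
  have hA : ((n:ℤ):ℝ) • u = (y₂:ℝ) • v₁ + (-(y₁:ℝ)) • v₂ := by
    rw [hv₁R, hv₂R, hnd]; push_cast; module
  have hB : ((n:ℤ):ℝ) • w = (-(x₂:ℝ)) • v₁ + (x₁:ℝ) • v₂ := by
    rw [hv₁R, hv₂R, hnd]; push_cast; module
  have hn0 : n ≠ 0 := by
    intro h
    rw [h] at hA hB
    push_cast at hA hB
    rw [zero_smul] at hA hB
    obtain ⟨hy₂, hy₁⟩ := hrel _ _ hA.symm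
    obtain ⟨hx₂, hx₁⟩ := hrel _ _ hB.symm
    apply hv₁ne
    rw [hv₁R]
    have : (x₁:ℝ) = 0 := by exact_mod_cast hx₁
    have hy : (y₁:ℝ) = 0 := by simpa using hy₁
    rw [this, hy]; simp
  have hnR : ((n:ℤ):ℝ) ≠ 0 := by exact_mod_cast hn0
  -- express u and w as real combinations of v₁, v₂ and conclude integrality
  have hucomb : ((1:ℤ):ℝ) • u + ((0:ℤ):ℝ) • w
      = ((n:ℝ)⁻¹ * y₂) • v₁ + ((n:ℝ)⁻¹ * (-(y₁:ℝ))) • v₂ := by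
    have h := congrArg (fun z : EuclideanSpace ℝ (Fin 2) => ((n:ℝ))⁻¹ • z) hA
    simp only [smul_add, smul_smul] at h
    rw [inv_mul_cancel₀ hnR, one_smul] at h
    push_cast
    rw [zero_smul, add_zero, one_smul]
    exact h
  have hwcomb : ((0:ℤ):ℝ) • u + ((1:ℤ):ℝ) • w
      = ((n:ℝ)⁻¹ * (-(x₂:ℝ))) • v₁ + ((n:ℝ)⁻¹ * x₁) • v₂ := by
    have h := congrArg (fun z : EuclideanSpace ℝ (Fin 2) => ((n:ℝ))⁻¹ • z) hB
    simp only [smul_add, smul_smul] at h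
    rw [inv_mul_cancel₀ hnR, one_smul] at h
    push_cast
    rw [zero_smul, zero_add, one_smul]
    exact h
  obtain ⟨pu, qu, hpu, hqu⟩ := main _ _ 1 0 hucomb
  obtain ⟨pw, qw, hpw, hqw⟩ := main _ _ 0 1 hwcomb
  have hu_int : u = (pu:ℝ) • v₁ + (qu:ℝ) • v₂ := by
    have := hucomb
    rw [hpu, hqu] at this
    push_cast at this
    rw [zero_smul, add_zero, one_smul] at this
    exact this
  have hw_int : w = (pw:ℝ) • v₁ + (qw:ℝ) • v₂ := by
    have := hwcomb
    rw [hpw, hqw] at this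
    push_cast at this
    rw [zero_smul, zero_add, one_smul] at this
    exact this
  -- coefficient identities from hu_int, hw_int
  have hu_exp : ((1:ℝ)) • u + (0:ℝ) • w
      = (((pu * x₁ + qu * x₂ : ℤ)):ℝ) • u + (((pu * y₁ + qu * y₂ : ℤ)):ℝ) • w := by
    calc (1:ℝ) • u + (0:ℝ) • w = u := by module
    _ = (pu:ℝ) • v₁ + (qu:ℝ) • v₂ := hu_int
    _ = _ := by rw [hv₁R, hv₂R]; push_cast; module
  have hw_exp : ((0:ℝ)) • u + (1:ℝ) • w
      = (((pw * x₁ + qw * x₂ : ℤ)):ℝ) • u + (((pw * y₁ + qw * y₂ : ℤ)):ℝ) • w := by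
    calc (0:ℝ) • u + (1:ℝ) • w = w := by module
    _ = (pw:ℝ) • v₁ + (qw:ℝ) • v₂ := hw_int
    _ = _ := by rw [hv₁R, hv₂R]; push_cast; module
  -- extract integer equations by comparing coordinates
  have extract : ∀ (c₀ c₁ : ℝ) (Xc Yc : ℤ),
      (c₀ • u + c₁ • w = ((Xc:ℤ):ℝ) • u + ((Yc:ℤ):ℝ) • w) →
      c₀ = Xc ∧ c₁ = Yc := by
    intro c₀ c₁ Xc Yc hcc
    have h1 := congrArg (fun z : EuclideanSpace ℝ (Fin 2) => z 1) hcc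
    simp only at h1
    rw [hc1, hc1] at h1
    have hy : c₁ = (Yc:ℝ) := mul_right_cancel₀ hsqrtpos.ne' h1
    have h0 := congrArg (fun z : EuclideanSpace ℝ (Fin 2) => z 0) hcc
    simp only at h0
    rw [hc0, hc0, hy] at h0
    have hx : c₀ = (Xc:ℝ) := by
      have : c₀ * a = (Xc:ℝ) * a := by linarith
      exact mul_right_cancel₀ haR.ne' this
    exact ⟨hx, hy⟩
  obtain ⟨hu0, hu1⟩ := extract _ _ _ _ hu_exp
  obtain ⟨hw0, hw1⟩ := extract _ _ _ _ hw_exp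
  have e1 : pu * x₁ + qu * x₂ = 1 := by exact_mod_cast hu0.symm
  have e2 : pu * y₁ + qu * y₂ = 0 := by exact_mod_cast hu1.symm
  have e3 : pw * x₁ + qw * x₂ = 0 := by exact_mod_cast hw0.symm
  have e4 : pw * y₁ + qw * y₂ = 1 := by exact_mod_cast hw1.symm
  -- n is a unit
  have hdet : n * (pu * qw - qu * pw) = 1 := by
    calc n * (pu * qw - qu * pw)
        = (pu * x₁ + qu * x₂) * (pw * y₁ + qw * y₂)
          - (pw * x₁ + qw * x₂) * (pu * y₁ + qu * y₂) := by rw [hnd]; ring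
    _ = 1 := by rw [e1, e2, e3, e4]; ring
  have hn2 : n^2 = 1 := by
    rcases Int.isUnit_iff.mp (IsUnit.of_mul_eq_one (a := n) _ hdet) with h | h <;> rw [h] <;> norm_num
  -- the Gram determinant identity
  have hgen : M * (E₂^2 + D * y₂^2) - S^2 = D * (a * n)^2 := by
    rw [hMd, hSd, hE₁, hE₂, hnd]; ring
  rw [hM2Z] at hgen
  have hfin : M * M - S^2 = D * (a:ℤ)^2 := by
    linear_combination hgen + ((D:ℤ) * (a:ℤ)^2) * hn2
  -- divisibility: M = a*μ, S = a*σ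
  obtain ⟨k, hk⟩ := hdvd
  have hkZ : ((b:ℤ))^2 + (D:ℤ) = (a:ℤ) * k := by exact_mod_cast hk
  set μ : ℤ := a * x₁^2 + 2 * b * x₁ * y₁ + k * y₁^2 with hμd
  set σ : ℤ := a * (x₁ * x₂) + b * (x₁ * y₂ + x₂ * y₁) + k * (y₁ * y₂) with hσd
  have hMμ : M = a * μ := by
    rw [hMd, hE₁, hμd]; linear_combination (y₁^2) * hkZ
  have hSσ : S = a * σ := by
    rw [hSd, hE₁, hE₂, hσd]; linear_combination (y₁ * y₂) * hkZ
  have haZ : (0:ℤ) < (a:ℤ) := by exact_mod_cast ha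
  have hμσ : μ^2 - σ^2 = D := by
    have h2 : (a:ℤ)^2 * (μ^2 - σ^2) = (a:ℤ)^2 * D := by
      rw [hMμ, hSσ] at hfin
      linear_combination hfin
    exact mul_left_cancel₀ (pow_ne_zero 2 haZ.ne') h2
  have hμpos : 0 < μ := by
    by_contra hμ
    push_neg at hμ
    have : (a:ℤ) * μ ≤ 0 := mul_nonpos_of_nonneg_of_nonpos haZ.le hμ
    rw [← hMμ] at this
    linarith
  have hσabs : 2 * |σ| ≤ μ := by
    have h : 2 * ((a:ℤ) * |σ|) ≤ (a:ℤ) * μ := by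
      have : |S| = (a:ℤ) * |σ| := by rw [hSσ, abs_mul, abs_of_nonneg haZ.le]
      rw [← this, ← hMμ]; exact hSbound
    have h' : (a:ℤ) * (2 * |σ|) ≤ (a:ℤ) * μ := by linarith
    exact le_of_mul_le_mul_left h' haZ
  -- conclude
  refine ⟨σ.natAbs, μ.natAbs, ?_, ?_, ?_, ?_, ?_⟩
  · rw [Int.natAbs_pos]
    intro hσ0
    rw [hσ0] at hμσ
    have hDeq : D = μ.natAbs * μ.natAbs := by
      have : (D:ℤ) = (μ.natAbs:ℤ) * μ.natAbs := by
        rw [← Int.abs_eq_natAbs, abs_mul_abs_self]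
        linear_combination - hμσ
      exact_mod_cast this
    have := Nat.isUnit_iff.mp (hsf μ.natAbs ⟨1, by rw [hDeq]; ring⟩)
    rw [this] at hDeq
    omega
  · rw [Int.natAbs_pos]; exact hμpos.ne'
  · set g := Nat.gcd σ.natAbs μ.natAbs with hg
    have hgp : g ∣ σ.natAbs := Nat.gcd_dvd_left _ _
    have hgq : g ∣ μ.natAbs := Nat.gcd_dvd_right _ _
    have hPQ : σ.natAbs^2 + D = μ.natAbs^2 := by
      have : ((σ.natAbs:ℤ))^2 + D = ((μ.natAbs:ℤ))^2 := by
        rw [← Int.abs_eq_natAbs, ← Int.abs_eq_natAbs, sq_abs, sq_abs]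
        linarith [hμσ]
      exact_mod_cast this
    have hDdvd : g * g ∣ D := by
      have h1 : g * g ∣ μ.natAbs^2 := by
        obtain ⟨c, hc⟩ := hgq; exact ⟨c^2, by rw [hc]; ring⟩
      have h2 : g * g ∣ σ.natAbs^2 := by
        obtain ⟨c, hc⟩ := hgp; exact ⟨c^2, by rw [hc]; ring⟩
      have : D = μ.natAbs^2 - σ.natAbs^2 := by omega
      rw [this]
      exact Nat.dvd_sub h1 h2
    exact Nat.isUnit_iff.mp (hsf g hDdvd)
  · have : ((σ.natAbs:ℤ))^2 + D = ((μ.natAbs:ℤ))^2 := by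
      rw [← Int.abs_eq_natAbs, ← Int.abs_eq_natAbs, sq_abs, sq_abs]
      linarith [hμσ]
    exact_mod_cast this
  · have : 2 * ((σ.natAbs:ℤ)) ≤ (μ.natAbs:ℤ) := by
      rw [← Int.abs_eq_natAbs, ← Int.abs_eq_natAbs, abs_of_pos hμpos]
      exact hσabs
    exact_mod_cast this
end

section
/- Let D ≢ 1 (mod 4) be a positive squarefree integer, K = ℚ(√D), and suppose a, b are positive integers with b < a, a | b² − D (so that a, b − √D generate an ideal of ℤ[√D]), and min{a², b² + D} ≥ 2ab. If the lattice Λ = [[a, b−√D],[a, b+√D]]·ℤ² is well-rounded, then a² = b² + D (hence a | 2D). -/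
lemma int_one_le_sq {x : ℤ} (hx : x ≠ 0) : 1 ≤ x^2 := by
  rcases hx.lt_or_gt with h | h <;> nlinarith

lemma aux_pos (a b D x y : ℤ) (ha : 0 < a) (hD : 0 < D) (hxy : ¬(x = 0 ∧ y = 0)) :
    0 < (a*x+b*y)^2 + D*y^2 := by
  rcases eq_or_ne y 0 with hy | hy
  · subst hy
    have hx : x ≠ 0 := fun h => hxy ⟨h, rfl⟩
    have h := int_one_le_sq hx
    nlinarith [mul_le_mul_of_nonneg_left h (by positivity : (0:ℤ) ≤ a^2)]
  · have := int_one_le_sq hy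
    nlinarith [sq_nonneg (a*x+b*y)]

lemma aux_min1 (a b D x y : ℤ) (ha : 0 < a) (hb : 0 < b) (hD : 0 < D)
    (h1 : 2*a*b ≤ a^2) (h2 : a^2 < b^2 + D) (hxy : ¬(x = 0 ∧ y = 0)) :
    a^2 ≤ (a*x+b*y)^2 + D*y^2 ∧
      ((a*x+b*y)^2 + D*y^2 = a^2 → y = 0 ∧ (x = 1 ∨ x = -1)) := by
  rcases eq_or_ne y 0 with hy | hy
  · subst hy
    have hx : x ≠ 0 := fun h => hxy ⟨h, rfl⟩
    have hx1 : 1 ≤ x^2 := int_one_le_sq hx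
    constructor
    · nlinarith
    · intro h
      have hx2 : x * x = 1 := by nlinarith
      exact ⟨rfl, mul_self_eq_one_iff.mp hx2⟩
  · have hy1 : 1 ≤ y^2 := int_one_le_sq hy
    have hlt : a^2 < (a*x+b*y)^2 + D*y^2 := by
      rcases le_or_gt 0 (x*y) with hs | hs
      · nlinarith [mul_nonneg (mul_nonneg (by linarith : (0:ℤ) ≤ 2*a) hb.le) hs,
          mul_le_mul_of_nonneg_left hy1 (by positivity : (0:ℤ) ≤ b^2+D)]
      · have hu : 1 ≤ -(x*y) := by omega
        have hx : x ≠ 0 := by rintro rfl; simp at hs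
        have hx1 : 1 ≤ x^2 := int_one_le_sq hx
        nlinarith [sq_nonneg (x+y), mul_le_mul_of_nonneg_left hy1 (by positivity : (0:ℤ) ≤ b^2+D),
          mul_le_mul_of_nonneg_left hu (by linarith : (0:ℤ) ≤ a^2 - 2*a*b)]
    exact ⟨hlt.le, fun h => absurd h (by omega)⟩

lemma aux_min2 (a b D x y : ℤ) (ha : 0 < a) (hb : 0 < b) (hD : 0 < D)
    (h1 : 2*a*b ≤ b^2 + D) (h2 : b^2 + D < a^2) (hxy : ¬(x = 0 ∧ y = 0)) :
    b^2 + D ≤ (a*x+b*y)^2 + D*y^2 ∧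
      ((a*x+b*y)^2 + D*y^2 = b^2 + D → x = 0 ∧ (y = 1 ∨ y = -1)) := by
  rcases eq_or_ne x 0 with hx | hx
  · subst hx
    have hy : y ≠ 0 := fun h => hxy ⟨rfl, h⟩
    have hy1 : 1 ≤ y^2 := int_one_le_sq hy
    constructor
    · nlinarith [mul_le_mul_of_nonneg_left hy1 (by positivity : (0:ℤ) ≤ b^2+D)]
    · intro h
      have hy2 : y * y = 1 := by nlinarith
      exact ⟨rfl, mul_self_eq_one_iff.mp hy2⟩
  · have hx1 : 1 ≤ x^2 := int_one_le_sq hx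
    have hlt : b^2 + D < (a*x+b*y)^2 + D*y^2 := by
      rcases le_or_gt 0 (x*y) with hs | hs
      · nlinarith [mul_nonneg (mul_nonneg (by linarith : (0:ℤ) ≤ 2*a) hb.le) hs,
          mul_le_mul_of_nonneg_left hx1 (by positivity : (0:ℤ) ≤ a^2), sq_nonneg y,
          mul_nonneg (by positivity : (0:ℤ) ≤ b^2+D) (sq_nonneg y)]
      · have hu : 1 ≤ -(x*y) := by omega
        have hy : y ≠ 0 := by rintro rfl; simp at hs
        have hy1 : 1 ≤ y^2 := int_one_le_sq hy
        nlinarith [sq_nonneg (x+y), mul_le_mul_of_nonneg_left hx1 (by linarith : (0:ℤ) ≤ a^2 - b^2 - D),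
          mul_le_mul_of_nonneg_left hu (by linarith : (0:ℤ) ≤ b^2 + D - 2*a*b)]
    exact ⟨hlt.le, fun h => absurd h (by omega)⟩

/-- Let `D ≢ 1 (mod 4)` be positive squarefree, `a, b` positive integers with `b < a`,
`a ∣ b² - D` and `min{a², b² + D} ≥ 2ab`. If the lattice with basis matrix
`[[a, b-√D],[a, b+√D]]` is well-rounded, then `a² = b² + D` (hence `a ∣ 2D`). -/
theorem stmt_17 (D : ℕ) (hD : 0 < D) (hsf : Squarefree D) (hmod : D % 4 ≠ 1)
    (a b : ℕ) (ha : 0 < a) (hb : 0 < b) (hba : b < a)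
    (hdvd : (a : ℤ) ∣ (b : ℤ) ^ 2 - D)
    (hred : 2 * a * b ≤ a ^ 2 ∧ 2 * a * b ≤ b ^ 2 + D)
    (v₁ v₂ : EuclideanSpace ℝ (Fin 2))
    (hv₁ : v₁ = ![(a : ℝ), (a : ℝ)])
    (hv₂ : v₂ = ![(b : ℝ) - Real.sqrt D, (b : ℝ) + Real.sqrt D])
    (Λ : Set (EuclideanSpace ℝ (Fin 2)))
    (hΛ : Λ = {v | ∃ x y : ℤ, v = x • v₁ + y • v₂})
    (hWR : ∃ w₁ ∈ Λ, ∃ w₂ ∈ Λ, LinearIndependent ℝ ![w₁, w₂] ∧ ‖w₁‖ = ‖w₂‖ ∧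
      ∀ v ∈ Λ, v ≠ 0 → ‖w₁‖ ≤ ‖v‖) :
    a ^ 2 = b ^ 2 + D ∧ a ∣ 2 * D := by
  have haZ : (0:ℤ) < a := by exact_mod_cast ha
  have hbZ : (0:ℤ) < b := by exact_mod_cast hb
  have hDZ : (0:ℤ) < D := by exact_mod_cast hD
  have h1Z : 2*(a:ℤ)*b ≤ (a:ℤ)^2 := by exact_mod_cast hred.1
  have h2Z : 2*(a:ℤ)*b ≤ (b:ℤ)^2 + D := by exact_mod_cast hred.2
  obtain ⟨w₁, hw₁Λ, w₂, hw₂Λ, hind, heqn, hmin⟩ := hWR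
  -- norm formula
  have hnorm : ∀ x y : ℤ, ‖(x • v₁ + y • v₂ : EuclideanSpace ℝ (Fin 2))‖^2
      = 2 * ((((a:ℤ)*x + b*y)^2 + D*y^2 : ℤ) : ℝ) := by
    intro x y
    have hs : Real.sqrt D ^ 2 = D := Real.sq_sqrt (by positivity)
    rw [EuclideanSpace.norm_eq, Real.sq_sqrt (by positivity), Fin.sum_univ_two]
    simp only [WithLp.ofLp_add, WithLp.ofLp_smul, Pi.add_apply, Pi.smul_apply, hv₁, hv₂]
    simp only [PiLp.add_apply, PiLp.smul_apply, Matrix.cons_val_zero, Matrix.cons_val_one,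
      Matrix.head_cons, zsmul_eq_mul, Real.norm_eq_abs, sq_abs]
    push_cast
    nlinarith [hs]
  -- membership and nonvanishing
  have hmem : ∀ x y : ℤ, (x • v₁ + y • v₂ : EuclideanSpace ℝ (Fin 2)) ∈ Λ := by
    intro x y; rw [hΛ]; exact ⟨x, y, rfl⟩
  have hne : ∀ x y : ℤ, ¬(x = 0 ∧ y = 0) →
      (x • v₁ + y • v₂ : EuclideanSpace ℝ (Fin 2)) ≠ 0 := by
    intro x y hxy h0
    have h := hnorm x y
    rw [h0] at h
    simp only [norm_zero, ne_eq, zero_pow] at h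
    have hq : ((((a:ℤ)*x + b*y)^2 + D*y^2 : ℤ) : ℝ) = 0 := by norm_num at h ⊢; linarith
    have hqz : (((a:ℤ)*x + b*y)^2 + D*y^2 : ℤ) = 0 := by exact_mod_cast hq
    exact absurd hqz (by have := aux_pos a b D x y haZ hDZ hxy; omega)
  rw [hΛ] at hw₁Λ hw₂Λ
  obtain ⟨x₁, y₁, hw₁⟩ := hw₁Λ
  obtain ⟨x₂, y₂, hw₂⟩ := hw₂Λ
  rw [linearIndependent_fin2] at hind
  simp only [Matrix.cons_val_one, Matrix.head_cons, Matrix.cons_val_zero, ne_eq] at hind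
  obtain ⟨hw₂0, hnp⟩ := hind
  -- coordinates nonzero
  have hxy₁ : ¬(x₁ = 0 ∧ y₁ = 0) := by
    rintro ⟨rfl, rfl⟩
    exact hnp 0 (by rw [hw₁]; simp)
  have hxy₂ : ¬(x₂ = 0 ∧ y₂ = 0) := by
    rintro ⟨rfl, rfl⟩
    exact hw₂0 (by rw [hw₂]; simp)
  -- Q-value comparisons
  set Q : ℤ → ℤ → ℤ := fun x y => ((a:ℤ)*x + b*y)^2 + D*y^2 with hQ
  have hQeq : Q x₁ y₁ = Q x₂ y₂ := by
    have h : ‖w₁‖^2 = ‖w₂‖^2 := by rw [heqn]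
    rw [hw₁, hw₂, hnorm, hnorm] at h
    have : ((Q x₁ y₁ : ℤ) : ℝ) = ((Q x₂ y₂ : ℤ) : ℝ) := by rw [hQ]; dsimp; linarith
    exact_mod_cast this
  have hQle : ∀ x y : ℤ, ¬(x = 0 ∧ y = 0) → Q x₁ y₁ ≤ Q x y := by
    intro x y hxy
    have h := hmin _ (hmem x y) (hne x y hxy)
    have h2 : ‖w₁‖^2 ≤ ‖(x • v₁ + y • v₂ : EuclideanSpace ℝ (Fin 2))‖^2 :=
      pow_le_pow_left₀ (norm_nonneg _) h 2
    rw [hw₁, hnorm, hnorm] at h2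
    have : ((Q x₁ y₁ : ℤ) : ℝ) ≤ ((Q x y : ℤ) : ℝ) := by rw [hQ]; dsimp; linarith
    exact_mod_cast this
  rcases lt_trichotomy ((a:ℤ)^2) ((b:ℤ)^2 + D) with hlt | heqc | hgt
  · -- minimal vectors are ±v₁, contradiction
    exfalso
    have h10 : Q x₁ y₁ ≤ (a:ℤ)^2 := by
      have h := hQle 1 0 (by simp)
      have hq10 : Q 1 0 = (a:ℤ)^2 := by rw [hQ]; ring
      linarith [hq10.le, hq10.ge]
    have h₁ := aux_min1 a b D x₁ y₁ haZ hbZ hDZ h1Z hlt hxy₁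
    have he₁ : Q x₁ y₁ = (a:ℤ)^2 := le_antisymm h10 h₁.1
    have h₂ := aux_min1 a b D x₂ y₂ haZ hbZ hDZ h1Z hlt hxy₂
    have he₂ : Q x₂ y₂ = (a:ℤ)^2 := le_antisymm (hQeq ▸ h10) h₂.1
    obtain ⟨hy₁, hx₁⟩ := h₁.2 he₁
    obtain ⟨hy₂, hx₂⟩ := h₂.2 he₂
    subst hy₁ hy₂
    apply hnp ((x₁ * x₂ : ℤ) : ℝ)
    rw [hw₁, hw₂]
    rcases hx₁ with rfl | rfl <;> rcases hx₂ with rfl | rfl <;>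
      simp [neg_smul, one_smul] <;> norm_num
  · constructor
    · exact_mod_cast heqc
    · have hd1 : (a:ℤ) ∣ (b:ℤ)^2 + D := heqc ▸ dvd_pow_self (a:ℤ) two_ne_zero
      have hd2 : (a:ℤ) ∣ 2*D := by
        have := dvd_sub hd1 hdvd
        have he : ((b:ℤ)^2 + D) - ((b:ℤ)^2 - D) = 2*D := by ring
        rwa [he] at this
      exact_mod_cast hd2
  · -- minimal vectors are ±v₂, contradiction
    exfalso
    have h01 : Q x₁ y₁ ≤ (b:ℤ)^2 + D := by
      have := hQle 0 1 (by simp)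
      have hq01 : Q 0 1 = (b:ℤ)^2 + D := by rw [hQ]; ring
      linarith [this, hq01.le, hq01.ge]
    have h₁ := aux_min2 a b D x₁ y₁ haZ hbZ hDZ h2Z hgt hxy₁
    have he₁ : Q x₁ y₁ = (b:ℤ)^2 + D := le_antisymm h01 h₁.1
    have h₂ := aux_min2 a b D x₂ y₂ haZ hbZ hDZ h2Z hgt hxy₂
    have he₂ : Q x₂ y₂ = (b:ℤ)^2 + D := le_antisymm (hQeq ▸ h01) h₂.1
    obtain ⟨hx₁, hy₁⟩ := h₁.2 he₁
    obtain ⟨hx₂, hy₂⟩ := h₂.2 he₂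
    subst hx₁ hx₂
    apply hnp ((y₁ * y₂ : ℤ) : ℝ)
    rw [hw₁, hw₂]
    rcases hy₁ with rfl | rfl <;> rcases hy₂ with rfl | rfl <;>
      simp [neg_smul, one_smul] <;> norm_num
end

section
/- For any squarefree positive integer D, the minimal squared norm of the lattice Ω_D(p,q) = [[q,p],[0,r√D]]ℤ² (with p²+r²D=q², gcd(p,q)=1, p/q ≤ 1/2) equals q², i.e. every nonzero vector (qx+py, r√D·y) with (x,y) ∈ ℤ²∖{0} has squared norm at least q². -/
/-- For `p² + Dr² = q²`, `gcd(p,q) = 1`, `p/q ≤ 1/2`, the minimal squared norm of the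
lattice `Ω_D(p,q) = [[q, p],[0, r√D]]·ℤ²` is `q²`: every nonzero lattice vector
`(qx + py, r√D·y)` has squared norm `(qx+py)² + r²Dy² ≥ q²`. -/
theorem stmt_19 (D p q r : ℕ) (hD : 0 < D) (hsf : Squarefree D)
    (hq : 0 < q) (hr : 0 < r)
    (hpq : p ^ 2 + D * r ^ 2 = q ^ 2) (hcop : Nat.gcd p q = 1) (h2 : 2 * p ≤ q) :
    ∀ x y : ℤ, ¬(x = 0 ∧ y = 0) →
      (q : ℤ) ^ 2 ≤ ((q : ℤ) * x + (p : ℤ) * y) ^ 2 + (r : ℤ) ^ 2 * D * y ^ 2 := by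
  intro x y hxy
  have hpq' : (p : ℤ) ^ 2 + (D : ℤ) * (r : ℤ) ^ 2 = (q : ℤ) ^ 2 := by exact_mod_cast hpq
  have hDr : (r : ℤ) ^ 2 * D = (q : ℤ) ^ 2 - (p : ℤ) ^ 2 := by linarith [hpq']
  rw [hDr]
  have h2' : 2 * (p : ℤ) ≤ (q : ℤ) := by exact_mod_cast h2
  have hq' : (0 : ℤ) < q := by exact_mod_cast hq
  have hp0 : (0 : ℤ) ≤ p := by positivity
  rcases eq_or_ne y 0 with hy | hy
  · subst hy
    have hx : x ≠ 0 := fun h => hxy ⟨h, rfl⟩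
    have hx2 : 1 ≤ x ^ 2 := by
      rcases (by omega : 1 ≤ x ∨ x ≤ -1) with h | h <;> nlinarith
    have : (q : ℤ) ^ 2 * 1 ≤ (q : ℤ) ^ 2 * x ^ 2 :=
      mul_le_mul_of_nonneg_left hx2 (sq_nonneg _)
    nlinarith
  · rcases eq_or_ne (y ^ 2) 1 with hy1 | hy1
    · -- |y| = 1
      rcases eq_or_ne x 0 with hx | hx
      · subst hx
        rw [hy1]
        nlinarith
      · have habsx : 1 ≤ |x| := by
          rcases (by omega : 1 ≤ x ∨ x ≤ -1) with h | h
          · rw [abs_of_pos (by omega)]; omega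
          · rw [abs_of_neg (by omega)]; omega
        have habsy : |y| = 1 := by
          have h1 : (y - 1) * (y + 1) = 0 := by linear_combination hy1
          rcases mul_eq_zero.mp h1 with h | h
          · have : y = 1 := by linarith
            simp [this]
          · have : y = -1 := by linarith
            simp [this]
        -- |qx + py| ≥ |qx| - |py| = q|x| - p ≥ q - p ≥ p
        have key : (p : ℤ) ≤ |(q : ℤ) * x + (p : ℤ) * y| := by
          have h1 : |(q : ℤ) * x| - |(p : ℤ) * y| ≤ |(q : ℤ) * x + (p : ℤ) * y| := by
            have := abs_sub_abs_le_abs_sub ((q : ℤ) * x) (-((p : ℤ) * y))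
            simp only [sub_neg_eq_add, abs_neg] at this
            linarith
          have h2q : |(q : ℤ) * x| = (q : ℤ) * |x| := by
            rw [abs_mul, abs_of_pos hq']
          have h2p : |(p : ℤ) * y| = (p : ℤ) := by
            rw [abs_mul, habsy, abs_of_nonneg hp0, mul_one]
          have h3 : (q : ℤ) ≤ (q : ℤ) * |x| := le_mul_of_one_le_right hq'.le habsx
          rw [h2q, h2p] at h1
          linarith
        have key2 : (p : ℤ) ^ 2 ≤ ((q : ℤ) * x + (p : ℤ) * y) ^ 2 := by
          calc (p : ℤ) ^ 2 ≤ |(q : ℤ) * x + (p : ℤ) * y| ^ 2 := by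
                exact pow_le_pow_left₀ hp0 key 2
          _ = ((q : ℤ) * x + (p : ℤ) * y) ^ 2 := sq_abs _
        rw [hy1]
        linarith
    · -- |y| ≥ 2
      have hyne1 : y ≠ 1 := fun h => hy1 (by rw [h]; ring)
      have hynem1 : y ≠ -1 := fun h => hy1 (by rw [h]; ring)
      have hy4 : 4 ≤ y ^ 2 := by
        rcases (by omega : 2 ≤ y ∨ y ≤ -2) with h | h <;> nlinarith
      have hqp : (0 : ℤ) ≤ (q : ℤ) ^ 2 - (p : ℤ) ^ 2 := by nlinarith
      have h4p : 4 * (p : ℤ) ^ 2 ≤ (q : ℤ) ^ 2 := by nlinarith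
      have hmain : (q : ℤ) ^ 2 ≤ ((q : ℤ) ^ 2 - (p : ℤ) ^ 2) * y ^ 2 := by
        have h5 := mul_le_mul_of_nonneg_left hy4 hqp
        have h6 : ((q : ℤ) ^ 2 - (p : ℤ) ^ 2) * 4 = 4 * (q:ℤ)^2 - 4*(p:ℤ)^2 := by ring
        linarith
      linarith [sq_nonneg ((q : ℤ) * x + (p : ℤ) * y)]
end
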